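/- Let G be a finite group and let 𝒦 and 𝓛 be partitions of the underlying set of G. Then span_ℂ{M̂ : M ∈ 𝒦∨𝓛} = span_ℂ{K̂ : K ∈ 𝒦} ∩ span_ℂ{L̂ : L ∈ 𝓛} inside ℂ[G], where 𝒦∨𝓛 denotes the join of the two partitions in the lattice of partitions of G. -/

import Mathlib

open scoped Classical
set_option linter.unusedSectionVars false
set_option linter.unusedVariables false

noncomputable section

/-- The set of irreducible complex characters of `G`. -/
def Irr (G : Type) [Group G] : Set (G → ℂ) :=
  {χ | ∃ V : FDRep ℂ G, CategoryTheory.Simple V ∧ FDRep.character V = χ}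

/-- `σ_X = ∑_{ψ ∈ X} ψ(1)·ψ`. -/
def sigmaChar {G : Type} [Group G] (X : Set (G → ℂ)) : G → ℂ :=
  fun g => ∑ᶠ ψ ∈ X, ψ 1 * ψ g

/-- `P` is a set partition of the set `S`. -/
def IsPartitionOf {α : Type*} (S : Set α) (P : Set (Set α)) : Prop :=
  ∅ ∉ P ∧ (∀ p ∈ P, p ⊆ S) ∧ ∀ a ∈ S, ∃! p, p ∈ P ∧ a ∈ p

/-- `(𝒳, 𝒦)` is a supercharacter theory of the finite group `G`. -/
def IsSCT (G : Type) [Group G] [Finite G]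
    (𝒳 : Set (Set (G → ℂ))) (𝒦 : Set (Set G)) : Prop :=
  IsPartitionOf (Irr G) 𝒳 ∧ IsPartitionOf Set.univ 𝒦 ∧ 𝒳.ncard = 𝒦.ncard ∧
    ({1} : Set G) ∈ 𝒦 ∧
    ∀ X ∈ 𝒳, ∀ K ∈ 𝒦, ∀ g ∈ K, ∀ h ∈ K, sigmaChar X g = sigmaChar X h

/-- `K̂ = ∑_{g ∈ K} g ∈ ℂ[G]`. -/
def ghat {G : Type} [Group G] (K : Set G) : MonoidAlgebra ℂ G :=
  ∑ᶠ g ∈ K, MonoidAlgebra.single g (1 : ℂ)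

/-- The central idempotent `e_χ = (χ(1)/|G|) ∑_g conj(χ g)·g` attached to a character. -/
def eIdem (G : Type) [Group G] (χ : G → ℂ) : MonoidAlgebra ℂ G :=
  (χ 1 / (Nat.card G : ℂ)) •
    ∑ᶠ g : G, (starRingEnd ℂ) (χ g) • MonoidAlgebra.single g (1 : ℂ)

/-- `f_X = ∑_{ψ ∈ X} e_ψ`. -/
def fIdem (G : Type) [Group G] (X : Set (G → ℂ)) : MonoidAlgebra ℂ G :=
  ∑ᶠ χ ∈ X, eIdem G χ

/-- Partition order: every part of `P` lies in some part of `Q`. -/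
def PartLE {α : Type*} (P Q : Set (Set α)) : Prop := ∀ p ∈ P, ∃ q ∈ Q, p ⊆ q

/-- The join of two partitions of the same set: parts are connected components of
the relation "lying in a common part of `P` or of `Q`". -/
def PartJoin {α : Type*} (P Q : Set (Set α)) : Set (Set α) :=
  {C | ∃ a ∈ ⋃₀ P, C = {b | Relation.ReflTransGen
      (fun x y => (∃ p ∈ P, x ∈ p ∧ y ∈ p) ∨ ∃ q ∈ Q, x ∈ q ∧ y ∈ q) a b}}

/-- Inner product of complex-valued functions on a finite group. -/
def cInner (H : Type) [Group H] (α β : H → ℂ) : ℂ :=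
  (Nat.card H : ℂ)⁻¹ * ∑ᶠ h : H, α h * (starRingEnd ℂ) (β h)

/-- Restriction of a function on `G` to a subgroup. -/
def resChar {G : Type} [Group G] (H : Subgroup G) (χ : G → ℂ) : ↥H → ℂ := fun h => χ ↑h

/-- Extension by zero of a function on a subgroup. -/
def zeroExtend {G : Type} [Group G] (H : Subgroup G) (φ : ↥H → ℂ) : G → ℂ :=
  fun g => if h : g ∈ H then φ ⟨g, h⟩ else 0

/-- The induced class function `φ^G`. -/
def indChar {G : Type} [Group G] (H : Subgroup G) (φ : ↥H → ℂ) : G → ℂ :=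
  fun g => (Nat.card ↥H : ℂ)⁻¹ * ∑ᶠ x : G, zeroExtend H φ (x⁻¹ * g * x)

/-- The superclass of `x` with respect to a partition `𝒦` of `G`. -/
def sclass {G : Type} [Group G] (𝒦 : Set (Set G)) (x : G) : Set G := ⋃₀ {K ∈ 𝒦 | x ∈ K}

/-- Superinduction: `φ^{(G)}(x) = [G:H]·(1/|[x]|)·∑_{y ∈ [x]} φ⁰(y)`. -/
def superInd {G : Type} [Group G] (𝒦 : Set (Set G)) (H : Subgroup G) (φ : ↥H → ℂ) : G → ℂ :=
  fun x => (H.index : ℂ) * (((sclass 𝒦 x).ncard : ℂ))⁻¹ * ∑ᶠ y ∈ sclass 𝒦 x, zeroExtend H φ y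

/-- A subgroup is `𝒞`-normal when it is a union of superclasses. -/
def CNormal {G : Type} [Group G] (𝒦 : Set (Set G)) (N : Subgroup G) : Prop :=
  ∃ T ⊆ 𝒦, (N : Set G) = ⋃₀ T

/-- `Irr(G/N)` viewed inside `Irr(G)`: irreducible characters with `N` in their kernel. -/
def IrrOver {G : Type} [Group G] (N : Subgroup G) : Set (G → ℂ) :=
  {χ ∈ Irr G | ∀ n ∈ N, χ n = χ 1}

/-- The set of irreducible constituents of the restriction of `θ` to `N`. -/
def constituentsOn {G : Type} [Group G] (N : Subgroup G) (θ : G → ℂ) : Set (↥N → ℂ) :=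
  {ψ ∈ Irr ↥N | cInner ↥N (resChar N θ) ψ ≠ 0}

/-- `Irr(G|ψ)`: irreducible characters of `G` lying over `ψ ∈ Irr(N)`. -/
def irrOverChar {G : Type} [Group G] (N : Subgroup G) (ψ : ↥N → ℂ) : Set (G → ℂ) :=
  {χ ∈ Irr G | cInner ↥N (resChar N χ) ψ ≠ 0}

/-- `X^G = ⋃_{ψ ∈ X} Irr(G|ψ)` for `X ⊆ Irr(N)`. -/
def indSet {G : Type} [Group G] (N : Subgroup G) (X : Set (↥N → ℂ)) : Set (G → ℂ) :=
  ⋃ ψ ∈ X, irrOverChar N ψ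

/-- Conjugation of a normal subgroup by a group element. -/
def conjSub {G : Type} [Group G] {N : Subgroup G} (hN : N.Normal) (g : G) (n : ↥N) : ↥N :=
  ⟨g * ↑n * g⁻¹, hN.conj_mem ↑n n.2 g⟩

/-- The conjugation action of `g ∈ G` on class functions of a normal subgroup `N`. -/
def charConj {G : Type} [Group G] {N : Subgroup G} (hN : N.Normal) (g : G)
    (ψ : ↥N → ℂ) : ↥N → ℂ :=
  fun n => ψ (conjSub hN g⁻¹ n)

/-- Inflation of a set of characters of `G/N` to characters of `G`. -/
def inflateSet {G : Type} [Group G] (N : Subgroup G) [N.Normal]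
    (Y : Set (G ⧸ N → ℂ)) : Set (G → ℂ) :=
  (fun η => η ∘ (QuotientGroup.mk : G → G ⧸ N)) '' Y

/-- Deflation of a set of characters of `G` (with `N` in their kernels) to characters
of `G/N`. -/
def deflate {G : Type} [Group G] (N : Subgroup G) [N.Normal]
    (X : Set (G → ℂ)) : Set (G ⧸ N → ℂ) :=
  (fun χ => fun q : G ⧸ N => χ (Quotient.out q)) '' X

/-- The natural map `M → MN/N ≤ G/N`. -/
def projMN {G : Type} [Group G] (M N : Subgroup G) [N.Normal] (m : ↥M) :
    ↥(M.map (QuotientGroup.mk' N)) :=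
  ⟨QuotientGroup.mk' N ↑m, Subgroup.mem_map_of_mem _ m.2⟩

end

section Aux

variable {G : Type} [Group G] [Finite G]

lemma ghat_apply' (K : Set G) (x : G) :
    (ghat K).coeff x = if x ∈ K then 1 else 0 := by
  classical
  haveI := Fintype.ofFinite G
  unfold ghat
  rw [← Set.coe_toFinset K, finsum_mem_coe_finset, MonoidAlgebra.coeff_sum, Finsupp.finset_sum_apply]
  simp [MonoidAlgebra.coeff_single, Finsupp.single_apply]

lemma part_unique {P : Set (Set G)} (hP : IsPartitionOf Set.univ P)
    {p q : Set G} (hp : p ∈ P) (hq : q ∈ P) {x : G} (hxp : x ∈ p) (hxq : x ∈ q) :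
    p = q := by
  obtain ⟨r, _, hu⟩ := hP.2.2 x (Set.mem_univ x)
  rw [hu p ⟨hp, hxp⟩, hu q ⟨hq, hxq⟩]

lemma mem_span_ghat_iff {P : Set (Set G)} (hP : IsPartitionOf Set.univ P)
    (f : MonoidAlgebra ℂ G) :
    f ∈ Submodule.span ℂ ((fun K => ghat K) '' P) ↔
      ∀ p ∈ P, ∀ x ∈ p, ∀ y ∈ p, f.coeff x = f.coeff y := by
  classical
  haveI := Fintype.ofFinite G
  constructor
  · intro hf
    induction hf using Submodule.span_induction with
    | mem v hv =>
      obtain ⟨q, hq, rfl⟩ := hv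
      intro p hp x hx y hy
      rw [ghat_apply', ghat_apply']
      by_cases hxq : x ∈ q
      · have : q = p := part_unique hP hq hp hxq hx
        subst this
        simp [hxq, hy]
      · have hyq : y ∉ q := by
          intro hyq
          exact hxq ((part_unique hP hq hp hyq hy) ▸ hx)
        simp [hxq, hyq]
    | zero => intro p hp x hx y hy; rfl
    | add a b _ _ ha hb =>
      intro p hp x hx y hy
      change a.coeff x + b.coeff x = a.coeff y + b.coeff y
      rw [ha p hp x hx y hy, hb p hp x hx y hy]
    | smul c a _ ha =>
      intro p hp x hx y hy
      change c * a.coeff x = c * a.coeff y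
      rw [ha p hp x hx y hy]
  · intro hf
    have hPfin : P.Finite := Set.toFinite P
    set c : Set G → ℂ := fun p => if h : p.Nonempty then f.coeff h.choose else 0 with hc
    have key : f = ∑ p ∈ hPfin.toFinset, c p • ghat p := by
      ext x
      rw [MonoidAlgebra.coeff_sum, Finsupp.finset_sum_apply]
      obtain ⟨p₀, ⟨hp₀, hxp₀⟩, hu⟩ := hP.2.2 x (Set.mem_univ x)
      rw [Finset.sum_eq_single p₀]
      · have hne : p₀.Nonempty := ⟨x, hxp₀⟩
        have : c p₀ = f.coeff hne.choose := by simp [hc, hne]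
        rw [MonoidAlgebra.coeff_smul_apply, ghat_apply', if_pos hxp₀, smul_eq_mul, mul_one, this]
        exact hf p₀ hp₀ x hxp₀ hne.choose hne.choose_spec
      · intro q hq hqne
        have hq' : q ∈ P := hPfin.mem_toFinset.mp hq
        have hxq : x ∉ q := fun hxq => hqne (part_unique hP hq' hp₀ hxq hxp₀)
        rw [MonoidAlgebra.coeff_smul_apply, ghat_apply', if_neg hxq, smul_zero]
      · intro h
        exact absurd (hPfin.mem_toFinset.mpr hp₀) h
    rw [key]
    refine Submodule.sum_mem _ fun p hp => Submodule.smul_mem _ _ ?_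
    exact Submodule.subset_span ⟨p, hPfin.mem_toFinset.mp hp, rfl⟩

variable (𝒦 𝓛 : Set (Set G))

local notation "R" => fun (x y : G) =>
  (∃ p ∈ 𝒦, x ∈ p ∧ y ∈ p) ∨ ∃ q ∈ 𝓛, x ∈ q ∧ y ∈ q

lemma Rsymm : Symmetric (R) := by
  rintro x y (⟨p, hp, h1, h2⟩ | ⟨q, hq, h1, h2⟩)
  · exact Or.inl ⟨p, hp, h2, h1⟩
  · exact Or.inr ⟨q, hq, h2, h1⟩

lemma sUnion_eq_univ (hP : IsPartitionOf (Set.univ : Set G) 𝒦) : ⋃₀ 𝒦 = Set.univ := by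
  ext x
  simp only [Set.mem_univ, iff_true, Set.mem_sUnion]
  obtain ⟨p, ⟨hp, hxp⟩, _⟩ := hP.2.2 x (Set.mem_univ x)
  exact ⟨p, hp, hxp⟩

lemma class_eq (a x : G) (hax : Relation.ReflTransGen (R) a x) :
    {b | Relation.ReflTransGen (R) a b} = {b | Relation.ReflTransGen (R) x b} := by
  have hsym := fun {x y : G} => (@Relation.ReflTransGen.symmetric G (R) ⟨fun _ _ h => Rsymm 𝒦 𝓛 h⟩).symm x y
  ext b
  exact ⟨fun h => (hsym hax).trans h, fun h => hax.trans h⟩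

lemma partJoin_isPartition (h𝒦 : IsPartitionOf (Set.univ : Set G) 𝒦)
    (h𝓛 : IsPartitionOf (Set.univ : Set G) 𝓛) :
    IsPartitionOf Set.univ (PartJoin 𝒦 𝓛) := by
  refine ⟨?_, fun p _ => Set.subset_univ p, ?_⟩
  · rintro ⟨a, _, ha⟩
    have : a ∈ (∅ : Set G) := ha ▸ Relation.ReflTransGen.refl
    exact this
  · intro x _
    refine ⟨{b | Relation.ReflTransGen (R) x b}, ⟨⟨x, ?_, rfl⟩, Relation.ReflTransGen.refl⟩, ?_⟩
    · rw [sUnion_eq_univ 𝒦 h𝒦]; trivial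
    · rintro C ⟨⟨a, _, rfl⟩, hxC⟩
      exact class_eq 𝒦 𝓛 a x hxC
lemma const_of_rtg {f : G → ℂ}
    (hK : ∀ p ∈ 𝒦, ∀ x ∈ p, ∀ y ∈ p, f x = f y)
    (hL : ∀ p ∈ 𝓛, ∀ x ∈ p, ∀ y ∈ p, f x = f y)
    {x y : G} (h : Relation.ReflTransGen (R) x y) : f x = f y := by
  induction h with
  | refl => rfl
  | tail _ step ih =>
    rename_i b c _
    refine ih.trans ?_
    rcases step with ⟨p, hp, h1, h2⟩ | ⟨q, hq, h1, h2⟩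
    · exact hK p hp b h1 c h2
    · exact hL q hq b h1 c h2

lemma const_iff (h𝒦 : IsPartitionOf (Set.univ : Set G) 𝒦)
    (h𝓛 : IsPartitionOf (Set.univ : Set G) 𝓛) (f : G → ℂ) :
    (∀ p ∈ PartJoin 𝒦 𝓛, ∀ x ∈ p, ∀ y ∈ p, f x = f y) ↔
      (∀ p ∈ 𝒦, ∀ x ∈ p, ∀ y ∈ p, f x = f y) ∧
        (∀ p ∈ 𝓛, ∀ x ∈ p, ∀ y ∈ p, f x = f y) := by
  constructor
  · intro hf
    have hmem : ∀ x : G, x ∈ ⋃₀ 𝒦 := by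
      intro x; rw [sUnion_eq_univ 𝒦 h𝒦]; trivial
    constructor
    · intro p hp x hx y hy
      exact hf _ ⟨x, hmem x, rfl⟩ x Relation.ReflTransGen.refl y
        (Relation.ReflTransGen.single (Or.inl ⟨p, hp, hx, hy⟩))
    · intro p hp x hx y hy
      exact hf _ ⟨x, hmem x, rfl⟩ x Relation.ReflTransGen.refl y
        (Relation.ReflTransGen.single (Or.inr ⟨p, hp, hx, hy⟩))
  · rintro ⟨hK, hL⟩ C hC x hx y hy
    obtain ⟨a, _, rfl⟩ := hC
    exact const_of_rtg 𝒦 𝓛 hK hL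
      ((((@Relation.ReflTransGen.symmetric G (R) ⟨fun _ _ h => Rsymm 𝒦 𝓛 h⟩).symm _ _) hx).trans hy)

end Aux

/-- Lemma 3.2. For partitions `𝒦, 𝓛` of `G`,
`span{M̂ : M ∈ 𝒦∨𝓛} = span{K̂ : K ∈ 𝒦} ∩ span{L̂ : L ∈ 𝓛}`. -/
theorem stmt4 (G : Type) [Group G] [Finite G] (𝒦 𝓛 : Set (Set G))
    (h𝒦 : IsPartitionOf Set.univ 𝒦) (h𝓛 : IsPartitionOf Set.univ 𝓛) :
    Submodule.span ℂ ((fun K => ghat K) '' PartJoin 𝒦 𝓛) =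
      Submodule.span ℂ ((fun K => ghat K) '' 𝒦) ⊓
        Submodule.span ℂ ((fun K => ghat K) '' 𝓛) := by
  have hJ := partJoin_isPartition 𝒦 𝓛 h𝒦 h𝓛
  ext f
  rw [Submodule.mem_inf, mem_span_ghat_iff hJ, mem_span_ghat_iff h𝒦,
    mem_span_ghat_iff h𝓛]
  exact const_iff 𝒦 𝓛 h𝒦 h𝓛 f.coeff
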